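/- arXiv:1208.5988 — 3 statements merged into one kernel-verified Lean document; each statement's English description precedes it below -/
import Mathlib

section
/- The entropy value of the shrinking circle: the circle of radius √2 centered at the origin in EuclideanSpace ℝ (Fin 2) satisfies F_{0,1}(S¹(√2)) = (4π)^{-1/2} ∫_{S¹(√2)} exp(-‖x‖²/4) dμ = √(2π/e), where μ is the 1-dimensional Hausdorff measure on EuclideanSpace ℝ (Fin 2). (This is the value λ(S¹) = √(2π/e) ≈ 1.5203.) -/
open MeasureTheory Real ENNReal

/-- The Gaussian surface area `F_{x₀,t₀}(Σ)` of a set `Σ ⊆ ℝ^{n+1}`, computed with respect to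
the `n`-dimensional Hausdorff measure, with values in `[0,∞]`. -/
noncomputable def gaussianArea (n : ℕ) (x₀ : EuclideanSpace ℝ (Fin (n + 1))) (t₀ : ℝ)
    (S : Set (EuclideanSpace ℝ (Fin (n + 1)))) : ℝ≥0∞ :=
  ENNReal.ofReal ((4 * π * t₀) ^ (-(n : ℝ) / 2)) *
    ∫⁻ x in S, ENNReal.ofReal (Real.exp (-‖x - x₀‖ ^ 2 / (4 * t₀))) ∂(μH[(n : ℝ)])

section Aux
open Complex

noncomputable def circ (r : ℝ) (θ : ℝ) : ℂ := r * Complex.exp (θ * Complex.I)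

lemma circ_dist (r : ℝ) (hr : 0 ≤ r) (s t : ℝ) :
    dist (circ r s) (circ r t) = 2 * r * |Real.sin ((s - t) / 2)| := by
  have key : Complex.exp (s * Complex.I) - Complex.exp (t * Complex.I)
      = Complex.exp ((((s : ℂ) + t) / 2) * Complex.I) *
        (2 * Complex.I * Complex.sin (((s : ℂ) - t) / 2)) := by
    rw [Complex.sin]
    rw [show ((s : ℂ)) * Complex.I = (((s : ℂ) + t) / 2) * Complex.I + (((s : ℂ) - t) / 2) * Complex.I by ring,
       show ((t : ℂ)) * Complex.I = (((s : ℂ) + t) / 2) * Complex.I + (-(((s : ℂ) - t) / 2) * Complex.I) by ring,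
       Complex.exp_add, Complex.exp_add]
    field_simp
    ring_nf
    simp [Complex.I_sq]
    ring
  have : circ r s - circ r t = (r : ℂ) * (Complex.exp (s * Complex.I) - Complex.exp (t * Complex.I)) := by
    simp [circ]; ring
  rw [Complex.dist_eq, this, key]
  rw [show (((s : ℂ) + t) / 2) = (((s + t) / 2 : ℝ) : ℂ) by push_cast; ring,
     show (((s : ℂ) - t) / 2) = (((s - t) / 2 : ℝ) : ℂ) by push_cast; ring]
  rw [← Complex.ofReal_sin]
  rw [norm_mul, norm_mul, norm_mul, Complex.norm_exp_ofReal_mul_I, Complex.norm_real,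
    Complex.norm_real, Real.norm_eq_abs, Real.norm_eq_abs, _root_.abs_of_nonneg hr]
  simp
  ring

lemma circ_norm (r : ℝ) (hr : 0 ≤ r) (θ : ℝ) : ‖circ r θ‖ = r := by
  simp [circ, Complex.norm_exp_ofReal_mul_I, Complex.norm_real, _root_.abs_of_nonneg hr]

lemma sphere_eq_image (r : ℝ) (hr : 0 ≤ r) :
    Metric.sphere (0 : ℂ) r = circ r '' Set.Icc (-π) π := by
  ext z
  simp only [Metric.mem_sphere, Complex.dist_eq, sub_zero, Set.mem_image]
  constructor
  · intro hz
    exact ⟨Complex.arg z, Set.Ioc_subset_Icc_self (Complex.arg_mem_Ioc z),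
      by rw [circ, ← hz]; exact Complex.norm_mul_exp_arg_mul_I z⟩
  · rintro ⟨θ, -, rfl⟩
    exact circ_norm r hr θ

lemma circ_lipschitz (r : NNReal) : LipschitzWith r (circ r) := by
  apply LipschitzWith.of_dist_le_mul
  intro s t
  rw [circ_dist r r.coe_nonneg, Real.dist_eq]
  calc 2 * (r : ℝ) * |Real.sin ((s - t) / 2)| ≤ 2 * r * |(s - t) / 2| := by
        have := Real.abs_sin_le_abs (x := (s - t) / 2)
        nlinarith [abs_nonneg ((s-t)/2), r.coe_nonneg]
    _ = r * |s - t| := by rw [abs_div]; simp; ring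

lemma circle_measure_le (r : NNReal) :
    μH[(1 : ℝ)] (Metric.sphere (0 : ℂ) r) ≤ ENNReal.ofReal (2 * π * r) := by
  rw [sphere_eq_image r r.coe_nonneg]
  calc μH[(1:ℝ)] (circ r '' Set.Icc (-π) π) ≤ (r : ℝ≥0∞) ^ (1:ℝ) * μH[(1:ℝ)] (Set.Icc (-π) π) :=
        (circ_lipschitz r).hausdorffMeasure_image_le zero_le_one _
    _ = ENNReal.ofReal (2 * π * r) := by
        rw [MeasureTheory.hausdorffMeasure_real, Real.volume_Icc, ENNReal.rpow_one]
        rw [show π - -π = 2 * π by ring, show (2 * π * r : ℝ) = r * (2*π) by ring,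
          ← ENNReal.ofReal_coe_nnreal, ← ENNReal.ofReal_mul r.coe_nonneg]

lemma circ_inj (r : ℝ) (hr : 0 < r) {s t : ℝ} (h : |s - t| < 2 * π)
    (he : circ r s = circ r t) : s = t := by
  have hd : dist (circ r s) (circ r t) = 0 := by rw [he, dist_self]
  rw [circ_dist r hr.le] at hd
  have hs : Real.sin ((s - t) / 2) = 0 := by
    rcases mul_eq_zero.mp hd with h' | h'
    · nlinarith
    · exact abs_eq_zero.mp h'
  rcases Real.sin_eq_zero_iff.1 hs with ⟨n, hn⟩
  have hn0 : n = 0 := by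
    by_contra h0
    have h1 : (1 : ℝ) ≤ |(n : ℝ)| := by exact_mod_cast Int.one_le_abs h0
    have h2 : |(n : ℝ) * π| < π := by rw [hn, abs_div, abs_of_pos (by norm_num : (0:ℝ) < 2)]; linarith
    rw [abs_mul, abs_of_pos pi_pos] at h2
    nlinarith [pi_pos, mul_le_mul_of_nonneg_right h1 pi_pos.le]
  rw [hn0] at hn
  simp at hn
  linarith

lemma chord_lower (r : ℝ) (hr : 0 < r) {u δ : ℝ} (hu : 0 ≤ u) (huδ : u ≤ δ) (hδ2 : δ ≤ 2) :
    r * (1 - δ ^ 2 / 16) * u ≤ 2 * r * |Real.sin (u / 2)| := by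
  rcases eq_or_lt_of_le hu with rfl | hu'
  · simp
  · have h1 : u / 2 ≤ 1 := by linarith
    have h2 : 0 < u / 2 := by linarith
    have hsin := Real.sin_gt_sub_cube h2
    have hpos : 0 < Real.sin (u / 2) := by nlinarith [mul_pos h2 h2, sq_nonneg (1 - u/2)]
    rw [abs_of_pos hpos]
    have hu2 : u ^ 2 ≤ δ ^ 2 := by nlinarith
    have h3 : u ^ 3 ≤ δ ^ 2 * u := by nlinarith
    nlinarith [mul_lt_mul_of_pos_left hsin hr, mul_le_mul_of_nonneg_left h3 hr.le, mul_nonneg hr.le (pow_nonneg hu 3)]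

lemma arc_antilipschitz (r : ℝ) (hr : 0 < r) (a : ℝ) {δ : ℝ} (hδ : 0 < δ) (hδ2 : δ ≤ 2) :
    AntilipschitzWith (Real.toNNReal (r * (1 - δ ^ 2 / 16))⁻¹)
      ((Set.Icc a (a + δ)).restrict (circ r)) := by
  set c : ℝ := r * (1 - δ ^ 2 / 16) with hc
  have hδsq : δ ^ 2 ≤ 4 := by nlinarith
  have hc0 : 0 < c := by rw [hc]; nlinarith
  apply AntilipschitzWith.of_le_mul_dist
  rintro ⟨x, hx⟩ ⟨y, hy⟩
  change dist x y ≤ _ * dist (circ r x) (circ r y)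
  obtain ⟨hx1, hx2⟩ := hx
  obtain ⟨hy1, hy2⟩ := hy
  rw [circ_dist r hr.le, Real.dist_eq]
  rw [Real.coe_toNNReal _ (by positivity)]
  rw [le_inv_mul_iff₀ hc0]
  have habs : |x - y| ≤ δ := abs_le.mpr ⟨by linarith, by linarith⟩
  have key := chord_lower r hr (abs_nonneg (x - y)) habs hδ2
  have heq : |Real.sin (|x - y| / 2)| = |Real.sin ((x - y) / 2)| := by
    rcases abs_cases (x - y) with ⟨h', _⟩ | ⟨h', _⟩ <;> rw [h']
    rw [show -(x - y) / 2 = -((x - y) / 2) by ring, Real.sin_neg, abs_neg]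
  rw [heq] at key
  exact key

lemma arc_measure_ge (r : ℝ) (hr : 0 < r) (a : ℝ) {δ : ℝ} (hδ : 0 < δ) (hδ2 : δ ≤ 2) :
    ENNReal.ofReal (δ * (r * (1 - δ ^ 2 / 16))) ≤ μH[(1:ℝ)] (circ r '' Set.Icc a (a + δ)) := by
  set c : ℝ := r * (1 - δ ^ 2 / 16) with hc
  have hδsq : δ ^ 2 ≤ 4 := by nlinarith
  have hc0 : 0 < c := by rw [hc]; nlinarith
  have hanti := arc_antilipschitz r hr a hδ hδ2
  have h1 := hanti.le_hausdorffMeasure_image zero_le_one Set.univ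
  rw [Set.image_univ, show Set.range ((Set.Icc a (a + δ)).restrict (circ r)) = circ r '' Set.Icc a (a + δ) from Set.range_domRestrict _ _] at h1
  have h2 : μH[(1:ℝ)] (Set.univ : Set (Set.Icc a (a + δ))) = ENNReal.ofReal δ := by
    have := isometry_subtype_coe.hausdorffMeasure_image (Or.inl zero_le_one)
      (Set.univ : Set (Set.Icc a (a + δ)))
    rw [Set.image_univ, Subtype.range_coe] at this
    rw [← this, MeasureTheory.hausdorffMeasure_real, Real.volume_Icc]
    norm_num
  rw [h2, ENNReal.rpow_one] at h1
  have hcoe : (Real.toNNReal c⁻¹ : ℝ≥0∞) = ENNReal.ofReal c⁻¹ := rfl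
  rw [hcoe] at h1
  calc ENNReal.ofReal (δ * c) = ENNReal.ofReal c * ENNReal.ofReal δ := by
        rw [← ENNReal.ofReal_mul hc0.le]; ring_nf
    _ ≤ ENNReal.ofReal c * (ENNReal.ofReal c⁻¹ * μH[(1:ℝ)] (circ r '' Set.Icc a (a + δ))) := by
        gcongr
    _ = (ENNReal.ofReal c * ENNReal.ofReal c⁻¹) * μH[(1:ℝ)] (circ r '' Set.Icc a (a + δ)) := by
        rw [mul_assoc]
    _ = μH[(1:ℝ)] (circ r '' Set.Icc a (a + δ)) := by
        rw [← ENNReal.ofReal_mul hc0.le, mul_inv_cancel₀ hc0.ne', ENNReal.ofReal_one, one_mul]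

lemma circ_continuous (r : ℝ) : Continuous (circ r) := by
  unfold circ; fun_prop

lemma image_Ico_eq (r : ℝ) (hr : 0 < r) (a : ℝ) {δ : ℝ} (hδ : 0 < δ) (hδ2π : δ < 2 * π) :
    circ r '' Set.Ico a (a + δ) = (circ r '' Set.Icc a (a + δ)) \ {circ r (a + δ)} := by
  ext z
  constructor
  · rintro ⟨s, hs, rfl⟩
    refine ⟨⟨s, Set.Ico_subset_Icc_self hs, rfl⟩, ?_⟩
    simp only [Set.mem_singleton_iff]
    intro he
    have hst : |s - (a + δ)| < 2 * π := by
      rw [abs_lt]; constructor <;> [linarith [hs.1, hs.2]; linarith [hs.1, hs.2]]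
    exact absurd (circ_inj r hr hst he) (ne_of_lt hs.2)
  · rintro ⟨⟨s, hs, rfl⟩, hz⟩
    simp only [Set.mem_singleton_iff] at hz
    exact ⟨s, ⟨hs.1, lt_of_le_of_ne hs.2 fun h => hz (by rw [h])⟩, rfl⟩

lemma circle_measure_ge (r : ℝ) (hr : 0 < r) {N : ℕ} (hN : 4 ≤ N) :
    ENNReal.ofReal (2 * π * (r * (1 - (2 * π / N) ^ 2 / 16)))
      ≤ μH[(1:ℝ)] (Metric.sphere (0:ℂ) r) := by
  haveI : NoAtoms (μH[(1:ℝ)] : Measure ℂ) := MeasureTheory.Measure.noAtoms_hausdorff ℂ one_pos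
  haveI : NullSingletonClass (μH[(1:ℝ)] : Measure ℂ) := MeasureTheory.Measure.nullSingletonClass_hausdorff ℂ one_pos
  have h4 : (4:ℝ) ≤ N := by exact_mod_cast hN
  have hNpos : (0:ℝ) < N := by linarith
  set δ : ℝ := 2 * π / N with hδdef
  have hδ : 0 < δ := by positivity
  have hδ2 : δ ≤ 2 := by
    rw [hδdef, div_le_iff₀ hNpos]
    linarith [Real.pi_le_four]
  have hδ2π : δ < 2 * π := by
    rw [hδdef, div_lt_iff₀ hNpos]
    nlinarith [Real.pi_pos]
  set c : ℝ := r * (1 - δ ^ 2 / 16) with hc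
  set a : ℕ → ℝ := fun k => -π + k * δ with ha
  set S : ℕ → Set ℂ := fun k => circ r '' Set.Ico (a k) (a k + δ) with hS
  -- each S k is measurable
  have hmeas : ∀ k, MeasurableSet (S k) := by
    intro k
    simp only [hS]
    rw [image_Ico_eq r hr _ hδ hδ2π]
    exact ((isCompact_Icc.image (circ_continuous r)).measurableSet).diff
      (measurableSet_singleton _)
  -- each S k has measure ≥ ofReal (δ * c)
  have hSk : ∀ k, ENNReal.ofReal (δ * c) ≤ μH[(1:ℝ)] (S k) := by
    intro k
    simp only [hS]
    rw [image_Ico_eq r hr _ hδ hδ2π, measure_diff_null (measure_singleton _)]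
    exact arc_measure_ge r hr _ hδ hδ2
  -- pairwise disjoint
  have hdisj : (↑(Finset.range N) : Set ℕ).Pairwise (Function.onFun Disjoint S) := by
    intro j hj k hk hjk
    simp only [Finset.coe_range, Set.mem_Iio] at hj hk
    rw [Function.onFun, Set.disjoint_left]
    rintro z ⟨s, hs, rfl⟩ ⟨t, ht, hzt⟩
    have hsmem : -π ≤ s ∧ s < π := by
      constructor
      · have : (0:ℝ) ≤ j * δ := by positivity
        simp only [ha] at hs; linarith [hs.1]
      · have hj' : (j:ℝ) + 1 ≤ N := by exact_mod_cast hj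
        have : a j + δ ≤ π := by
          simp only [ha]
          have : ((j:ℝ) + 1) * δ ≤ N * δ := by
            apply mul_le_mul_of_nonneg_right hj' hδ.le
          have hNδ : (N:ℝ) * δ = 2 * π := by
            rw [hδdef]; field_simp
          nlinarith [hs.2]
        linarith [hs.2]
    have htmem : -π ≤ t ∧ t < π := by
      constructor
      · have : (0:ℝ) ≤ k * δ := by positivity
        simp only [ha] at ht; linarith [ht.1]
      · have hk' : (k:ℝ) + 1 ≤ N := by exact_mod_cast hk
        have : a k + δ ≤ π := by
          simp only [ha]
          have : ((k:ℝ) + 1) * δ ≤ N * δ := by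
            apply mul_le_mul_of_nonneg_right hk' hδ.le
          have hNδ : (N:ℝ) * δ = 2 * π := by
            rw [hδdef]; field_simp
          nlinarith [ht.2]
        linarith [ht.2]
    have hst : |s - t| < 2 * π := by
      rw [abs_lt]; constructor <;> [linarith [hsmem.1, htmem.2]; linarith [hsmem.2, htmem.1]]
    have heq := circ_inj r hr hst hzt.symm
    subst heq
    -- now s ∈ Ico (a j) (a j + δ) and s ∈ Ico (a k) (a k + δ), j ≠ k
    simp only [ha, Set.mem_Ico] at hs ht
    have h1 : (j:ℝ) < k + 1 := by
      by_contra h'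
      push_neg at h'
      have : ((k:ℝ) + 1) * δ ≤ (j:ℝ) * δ := mul_le_mul_of_nonneg_right h' hδ.le
      nlinarith [hs.1, ht.2]
    have h2 : (k:ℝ) < j + 1 := by
      by_contra h'
      push_neg at h'
      have : ((j:ℝ) + 1) * δ ≤ (k:ℝ) * δ := mul_le_mul_of_nonneg_right h' hδ.le
      nlinarith [ht.1, hs.2]
    have : j = k := by
      have h1' : j < k + 1 := by exact_mod_cast h1
      have h2' : k < j + 1 := by exact_mod_cast h2
      omega
    exact hjk this
  -- union is inside the sphere
  have hsub : (⋃ k ∈ Finset.range N, S k) ⊆ Metric.sphere (0:ℂ) r := by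
    intro z hz
    simp only [Set.mem_iUnion] at hz
    obtain ⟨k, -, s, -, rfl⟩ := hz
    simp only [Metric.mem_sphere, Complex.dist_eq, sub_zero]
    exact circ_norm r hr.le s
  calc ENNReal.ofReal (2 * π * c) = ∑ _k ∈ Finset.range N, ENNReal.ofReal (δ * c) := by
        rw [Finset.sum_const, Finset.card_range, nsmul_eq_mul,
          ← ENNReal.ofReal_natCast, ← ENNReal.ofReal_mul (Nat.cast_nonneg N)]
        congr 1
        rw [hδdef]; field_simp
    _ ≤ ∑ k ∈ Finset.range N, μH[(1:ℝ)] (S k) := Finset.sum_le_sum fun k _ => hSk k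
    _ = μH[(1:ℝ)] (⋃ k ∈ Finset.range N, S k) :=
        (measure_biUnion_finset hdisj fun k _ => hmeas k).symm
    _ ≤ μH[(1:ℝ)] (Metric.sphere (0:ℂ) r) := measure_mono hsub

lemma circle_measure (r : ℝ) (hr : 0 < r) :
    μH[(1:ℝ)] (Metric.sphere (0:ℂ) r) = ENNReal.ofReal (2 * π * r) := by
  refine le_antisymm (by exact circle_measure_le ⟨r, hr.le⟩) ?_
  have h0 : Filter.Tendsto (fun N : ℕ => 2 * π / (N:ℝ)) Filter.atTop (nhds 0) :=
    tendsto_const_div_atTop_nhds_zero_nat _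
  have h1 : Filter.Tendsto (fun N : ℕ => 2 * π * (r * (1 - (2 * π / N) ^ 2 / 16)))
      Filter.atTop (nhds (2 * π * r)) := by
    have := ((((h0.pow 2).div_const 16).const_sub 1).const_mul r).const_mul (2 * π)
    simpa using this
  refine le_of_tendsto (ENNReal.tendsto_ofReal h1) ?_
  filter_upwards [Filter.eventually_ge_atTop 4] with N hN using circle_measure_ge r hr hN

lemma sphere_E_measure (r : ℝ) (hr : 0 < r) :
    μH[(1:ℝ)] (Metric.sphere (0 : EuclideanSpace ℝ (Fin 2)) r) = ENNReal.ofReal (2 * π * r) := by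
  let e : ℂ ≃ₗᵢ[ℝ] EuclideanSpace ℝ (Fin 2) :=
    Complex.isometryOfOrthonormal (EuclideanSpace.basisFun (Fin 2) ℝ)
  have himg : e '' Metric.sphere (0:ℂ) r = Metric.sphere (0 : EuclideanSpace ℝ (Fin 2)) r := by
    ext x
    constructor
    · rintro ⟨z, hz, rfl⟩
      simp only [Metric.mem_sphere] at hz ⊢
      calc dist (e z) 0 = dist (e z) (e 0) := by rw [map_zero]
        _ = dist z 0 := e.dist_map z 0
        _ = r := hz
    · intro hx
      refine ⟨e.symm x, ?_, by simp⟩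
      simp only [Metric.mem_sphere] at hx ⊢
      calc dist (e.symm x) 0 = dist (e.symm x) (e.symm 0) := by rw [map_zero]
        _ = dist x 0 := e.symm.dist_map x 0
        _ = r := hx
  have h := e.isometry.hausdorffMeasure_image (Or.inl zero_le_one) (Metric.sphere (0:ℂ) r)
  rw [himg] at h
  rw [h, circle_measure r hr]

end Aux

/-- The entropy of the shrinking circle: `F_{0,1}` of the circle of radius `√2` in `ℝ²`
equals `√(2π/e)`. -/
theorem gaussianArea_shrinking_circle :
    gaussianArea 1 0 1 (Metric.sphere (0 : EuclideanSpace ℝ (Fin 2)) (Real.sqrt 2)) =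
      ENNReal.ofReal (Real.sqrt (2 * π / Real.exp 1)) := by
  rw [gaussianArea]
  simp only [Nat.cast_one]
  have hsq2 : (0:ℝ) < Real.sqrt 2 := Real.sqrt_pos.mpr (by norm_num)
  have hint : (∫⁻ x in Metric.sphere (0 : EuclideanSpace ℝ (Fin 2)) (Real.sqrt 2),
      ENNReal.ofReal (Real.exp (-‖x - 0‖ ^ 2 / (4 * 1))) ∂(μH[(1 : ℝ)]))
      = ENNReal.ofReal (Real.exp (-2/4)) * ENNReal.ofReal (2 * π * Real.sqrt 2) := by
    rw [MeasureTheory.setLIntegral_congr_fun Metric.isClosed_sphere.measurableSet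
      (g := fun _ => ENNReal.ofReal (Real.exp (-2/4)))]
    · rw [MeasureTheory.setLIntegral_const]
      norm_num
      rw [sphere_E_measure _ hsq2]
    · intro x hx
      have hx' : ‖x‖ = Real.sqrt 2 := mem_sphere_zero_iff_norm.mp hx
      beta_reduce
      rw [sub_zero, hx', Real.sq_sqrt (by norm_num : (0:ℝ) ≤ 2)]
      norm_num
  rw [hint]
  rw [← ENNReal.ofReal_mul (by positivity), ← ENNReal.ofReal_mul (by positivity)]
  congr 1
  rw [mul_one, show -(1:ℝ)/2 = -(1/2) by norm_num, Real.rpow_neg (by positivity),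
    ← Real.sqrt_eq_rpow]
  rw [show (-2/4 : ℝ) = -(1/2) by norm_num, Real.exp_neg,
    show (1/2 : ℝ) = 1/2 from rfl]
  rw [show Real.exp (1/2) = Real.sqrt (Real.exp 1) from by
    rw [← Real.exp_half]]
  rw [show Real.sqrt (4*π) = 2 * Real.sqrt π from by
    rw [show (4*π : ℝ) = 2^2 * π by norm_num, Real.sqrt_mul (by positivity),
      Real.sqrt_sq (by norm_num)]]
  have hπ : Real.sqrt π * Real.sqrt π = π := Real.mul_self_sqrt Real.pi_pos.le
  have h1 : (0:ℝ) < Real.sqrt π := Real.sqrt_pos.mpr Real.pi_pos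
  have h2 : (0:ℝ) < Real.sqrt (Real.exp 1) := Real.sqrt_pos.mpr (Real.exp_pos 1)
  rw [Real.sqrt_div (by positivity : (0:ℝ) ≤ 2 * π), Real.sqrt_mul (by norm_num : (0:ℝ) ≤ 2)]
  field_simp
  have hπ2 : Real.sqrt π ^ 2 = π := Real.sq_sqrt Real.pi_pos.le
  linear_combination (-1 : ℝ) * hπ2
end

section
/- For any n ≥ 1 and any radius R > 0, the Gaussian surface area of the sphere Sⁿ(R) = Metric.sphere 0 R in EuclideanSpace ℝ (Fin (n+1)) centered at the origin, as a function of the scale t₀ > 0, is maximized at t₀ = R²/(2n): for all t₀ > 0, F_{0,t₀}(Sⁿ(R)) ≤ F_{0, R²/(2n)}(Sⁿ(R)), where F_{0,t₀}(Σ) = (4π t₀)^{-n/2} ∫_Σ exp(-‖x‖²/(4 t₀)) dμ and μ is the n-dimensional Hausdorff measure. -/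
open MeasureTheory Real ENNReal

lemma key_ineq (a : ℝ) (ha : 0 < a) (s : ℝ) (hs : 0 < s) :
    s ^ a * Real.exp (-s) ≤ a ^ a * Real.exp (-a) := by
  rw [← Real.exp_log (Real.rpow_pos_of_pos hs a), ← Real.exp_log (Real.rpow_pos_of_pos ha a),
    ← Real.exp_add, ← Real.exp_add, Real.exp_le_exp, Real.log_rpow hs, Real.log_rpow ha]
  have h := Real.log_le_sub_one_of_pos (div_pos hs ha)
  rw [Real.log_div hs.ne' ha.ne'] at h
  have h2 := mul_le_mul_of_nonneg_left h ha.le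
  have h3 : a * (s / a) = s := by field_simp
  nlinarith

lemma form_eq (a R t : ℝ) (hR : 0 < R) (ht : 0 < t) :
    (4 * π * t) ^ (-a) * Real.exp (-R ^ 2 / (4 * t)) =
      (π * R ^ 2) ^ (-a) * ((R ^ 2 / (4 * t)) ^ a * Real.exp (-(R ^ 2 / (4 * t)))) := by
  have hs : (0:ℝ) < R ^ 2 / (4 * t) := by positivity
  have h1 : 4 * π * t = (π * R ^ 2) / (R ^ 2 / (4 * t)) := by field_simp
  rw [h1, Real.div_rpow (by positivity) hs.le, Real.rpow_neg hs.le, div_inv_eq_mul, neg_div]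
  ring

lemma real_ineq (n : ℕ) (hn : 1 ≤ n) (R t : ℝ) (hR : 0 < R) (ht : 0 < t) :
    (4 * π * t) ^ (-(n : ℝ) / 2) * Real.exp (-R ^ 2 / (4 * t)) ≤
      (4 * π * (R ^ 2 / (2 * n))) ^ (-(n : ℝ) / 2) *
        Real.exp (-R ^ 2 / (4 * (R ^ 2 / (2 * n)))) := by
  have hn0 : (0:ℝ) < n := by exact_mod_cast hn
  set a : ℝ := (n : ℝ) / 2 with ha_def
  have ha : 0 < a := by positivity
  have ht' : (0:ℝ) < R ^ 2 / (2 * n) := by positivity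
  have hneg : -(n : ℝ) / 2 = -a := by rw [ha_def]; ring
  rw [hneg, form_eq a R t hR ht, form_eq a R _ hR ht']
  have hstar : R ^ 2 / (4 * (R ^ 2 / (2 * n))) = a := by
    rw [ha_def]; field_simp; ring
  rw [hstar]
  exact mul_le_mul_of_nonneg_left
    (key_ineq a ha _ (by positivity)) (Real.rpow_nonneg (by positivity) _)

lemma area_eq (n : ℕ) (R t : ℝ) (ht : 0 < t) :
    gaussianArea n 0 t (Metric.sphere (0 : EuclideanSpace ℝ (Fin (n + 1))) R) =
      ENNReal.ofReal ((4 * π * t) ^ (-(n : ℝ) / 2) * Real.exp (-R ^ 2 / (4 * t))) *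
        μH[(n : ℝ)] (Metric.sphere (0 : EuclideanSpace ℝ (Fin (n + 1))) R) := by
  unfold gaussianArea
  rw [setLIntegral_congr_fun (Metric.isClosed_sphere).measurableSet
      (fun x hx => by rw [sub_zero, mem_sphere_zero_iff_norm.mp hx]),
    setLIntegral_const, ENNReal.ofReal_mul (by positivity)]
  ring

/-- For the round sphere `Sⁿ(R)` centered at the origin, the Gaussian surface area, as a
function of the scale `t₀ > 0`, is maximized at the self-shrinking scale `t₀ = R²/(2n)`. -/
theorem gaussianArea_sphere_le_self_shrinking_scale (n : ℕ) (hn : 1 ≤ n) (R : ℝ) (hR : 0 < R) :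
    ∀ t₀ : ℝ, 0 < t₀ →
      gaussianArea n 0 t₀ (Metric.sphere (0 : EuclideanSpace ℝ (Fin (n + 1))) R) ≤
        gaussianArea n 0 (R ^ 2 / (2 * n))
          (Metric.sphere (0 : EuclideanSpace ℝ (Fin (n + 1))) R) := by
  intro t₀ ht₀
  have hn0 : (0:ℝ) < n := by exact_mod_cast hn
  have ht' : (0:ℝ) < R ^ 2 / (2 * n) := by positivity
  rw [area_eq n R t₀ ht₀, area_eq n R _ ht']
  exact mul_le_mul_left
    (ENNReal.ofReal_le_ofReal (real_ineq n hn R t₀ hR ht₀)) _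
end

section
/- Explicit negative gradient flow of a diagonal quadratic on Hilbert space: let H be a real Hilbert space with a Hilbert basis (wᵢ)_{i ∈ ι}, and let μ : ι → ℝ be bounded (there is C with |μᵢ| ≤ C for all i). Define f : H → ℝ by f(w) = (1/2) ∑'ᵢ μᵢ · ⟪w, wᵢ⟫², and for w ∈ H and t ∈ ℝ define Ψ_t(w) = ∑'ᵢ exp(-μᵢ t) · ⟪w, wᵢ⟫ • wᵢ (the sum converges in H). Then f is differentiable with gradient ∇f(w) = ∑'ᵢ μᵢ ⟪w, wᵢ⟫ • wᵢ, and for each w ∈ H the curve γ(t) = Ψ_t(w) satisfies γ(0) = w and γ'(t) = -∇f(γ(t)) for all t ∈ ℝ. -/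
open RealInnerProductSpace

set_option maxHeartbeats 2000000

section Aux

variable {H : Type*} [NormedAddCommGroup H] [InnerProductSpace ℝ H] [CompleteSpace H]
  {ι : Type*}

private lemma aux_sq_summable (w : HilbertBasis ι ℝ H) (x : H) :
    Summable fun i => ⟪x, w i⟫ ^ 2 := by
  have h := w.orthonormal.inner_products_summable (x := x)
  simpa [Real.norm_eq_abs, sq_abs, real_inner_comm] using h

private lemma aux_tsum_sq_le (w : HilbertBasis ι ℝ H) (x : H) :
    ∑' i, ⟪x, w i⟫ ^ 2 ≤ ‖x‖ ^ 2 := by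
  have h := w.orthonormal.tsum_inner_products_le (x := x)
  simpa [Real.norm_eq_abs, sq_abs, real_inner_comm] using h

private lemma aux_summable_smul (w : HilbertBasis ι ℝ H) (c : ι → ℝ)
    (hc : Summable fun i => c i ^ 2) :
    Summable fun i => c i • w i := by
  have hm : Memℓp c 2 := by
    apply memℓp_gen
    have h2 : ∀ i, ‖c i‖ ^ (2 : ENNReal).toReal = c i ^ 2 := by
      intro i
      rw [ENNReal.toReal_ofNat, Real.rpow_two, Real.norm_eq_abs, sq_abs]
    exact hc.congr fun i => (h2 i).symm
  exact ⟨w.repr.symm ⟨c, hm⟩, w.hasSum_repr_symm ⟨c, hm⟩⟩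

private lemma aux_inner_tsum (w : HilbertBasis ι ℝ H) {c : ι → ℝ} {y : H}
    (hy : HasSum (fun i => c i • w i) y) (j : ι) : ⟪y, w j⟫ = c j := by
  classical
  have h1 : HasSum (fun i => ⟪w j, c i • w i⟫) ⟪w j, y⟫ := hy.mapL (innerSL ℝ (w j))
  have horth := orthonormal_iff_ite.1 w.orthonormal
  have h2 : (fun i => ⟪w j, c i • w i⟫) = fun i => if i = j then c j else 0 := by
    funext i
    rw [real_inner_smul_right, horth j i]
    by_cases hij : i = j
    · subst hij; simp
    · simp [hij, Ne.symm hij]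
  rw [h2] at h1
  rw [real_inner_comm, h1.unique (hasSum_ite_eq j (c j))]

private lemma aux_norm_sq (w : HilbertBasis ι ℝ H) {c : ι → ℝ} {y : H}
    (hy : HasSum (fun i => c i • w i) y) :
    HasSum (fun i => c i ^ 2) (‖y‖ ^ 2) := by
  have h1 : HasSum (fun i => ⟪y, c i • w i⟫) ⟪y, y⟫ := hy.mapL (innerSL ℝ y)
  have h2 : (fun i => ⟪y, c i • w i⟫) = fun i => c i ^ 2 := by
    funext i
    rw [real_inner_smul_right, aux_inner_tsum w hy i]; ring
  rw [h2, real_inner_self_eq_norm_sq] at h1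
  exact h1

/-- If every coefficient is bounded by `K` times the corresponding Fourier coefficient of `x`,
then the sum has norm at most `K * ‖x‖`. -/
private lemma aux_norm_le (w : HilbertBasis ι ℝ H) {c : ι → ℝ} {y : H} {K : ℝ} {x : H}
    (hy : HasSum (fun i => c i • w i) y) (hK : 0 ≤ K)
    (hb : ∀ i, |c i| ≤ K * |⟪x, w i⟫|) : ‖y‖ ≤ K * ‖x‖ := by
  have h1 : HasSum (fun i => c i ^ 2) (‖y‖ ^ 2) := aux_norm_sq w hy
  have h2 : ∑' i, c i ^ 2 ≤ ∑' i, K ^ 2 * ⟪x, w i⟫ ^ 2 := by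
    refine Summable.tsum_le_tsum (fun i => ?_) h1.summable ((aux_sq_summable w x).mul_left _)
    have := hb i
    nlinarith [abs_nonneg (c i), abs_nonneg ⟪x, w i⟫, sq_abs (c i), sq_abs ⟪x, w i⟫]
  rw [h1.tsum_eq, tsum_mul_left] at h2
  have h3 : ‖y‖ ^ 2 ≤ (K * ‖x‖) ^ 2 := by
    have := aux_tsum_sq_le w x
    nlinarith [sq_nonneg K]
  nlinarith [norm_nonneg y, norm_nonneg x, mul_nonneg hK (norm_nonneg x)]

end Aux

/-- Explicit negative gradient flow of a diagonal quadratic on a Hilbert space: for a Hilbert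
basis `(wᵢ)` and bounded coefficients `(μᵢ)`, the function `f(x) = (1/2) ∑' i, μᵢ ⟪x, wᵢ⟫²`
has gradient `∇f(x) = ∑' i, μᵢ ⟪x, wᵢ⟫ wᵢ`, and `Ψ_t(x) = ∑' i, e^{-μᵢ t} ⟪x, wᵢ⟫ wᵢ`
(the sum converging in `H`) is the negative gradient flow of `f` starting at `x`. -/
theorem negGradientFlow_diagonal_quadratic_hilbert
    {H : Type*} [NormedAddCommGroup H] [InnerProductSpace ℝ H] [CompleteSpace H]
    {ι : Type*} (w : HilbertBasis ι ℝ H) (μ : ι → ℝ) (C : ℝ) (hC : ∀ i, |μ i| ≤ C)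
    (f : H → ℝ) (hf : ∀ x : H, f x = 1 / 2 * ∑' i, μ i * ⟪x, w i⟫ ^ 2)
    (Ψ : ℝ → H → H)
    (hΨ : ∀ (t : ℝ) (x : H), Ψ t x = ∑' i, (Real.exp (-μ i * t) * ⟪x, w i⟫) • w i) :
    (∀ (t : ℝ) (x : H), Summable fun i => (Real.exp (-μ i * t) * ⟪x, w i⟫) • w i) ∧
    (∀ x : H, HasGradientAt f (∑' i, (μ i * ⟪x, w i⟫) • w i) x) ∧
    (∀ x : H, Ψ 0 x = x ∧
      ∀ t : ℝ, HasDerivAt (fun s => Ψ s x) (-(∑' i, (μ i * ⟪Ψ t x, w i⟫) • w i)) t) := by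
  classical
  obtain ⟨D, hD0, hD⟩ : ∃ D : ℝ, 0 < D ∧ ∀ i, |μ i| ≤ D :=
    ⟨|C| + 1, by positivity,
      fun i => (hC i).trans ((le_abs_self C).trans (by linarith [abs_nonneg C]))⟩
  -- Part 1 : summability
  have part1 : ∀ (t : ℝ) (x : H),
      Summable fun i => (Real.exp (-μ i * t) * ⟪x, w i⟫) • w i := by
    intro t x
    apply aux_summable_smul
    apply Summable.of_nonneg_of_le (fun i => sq_nonneg _)
      (f := fun i => Real.exp (D * |t|) ^ 2 * ⟪x, w i⟫ ^ 2)
    · intro i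
      have h1 : Real.exp (-μ i * t) ≤ Real.exp (D * |t|) := by
        apply Real.exp_le_exp.2
        calc -μ i * t ≤ |(-μ i) * t| := le_abs_self _
          _ = |μ i| * |t| := by rw [abs_mul, abs_neg]
          _ ≤ D * |t| := by have := hD i; have := abs_nonneg t; nlinarith
      have h2 : (0:ℝ) < Real.exp (-μ i * t) := Real.exp_pos _
      rw [mul_pow]
      have : Real.exp (-μ i * t) ^ 2 ≤ Real.exp (D * |t|) ^ 2 := by nlinarith
      nlinarith [sq_nonneg ⟪x, w i⟫]
    · exact (aux_sq_summable w x).mul_left _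
  -- summability of the gradient coefficients for any vector y
  have gradSummable : ∀ y : H, Summable fun i => (μ i * ⟪y, w i⟫) • w i := by
    intro y
    apply aux_summable_smul
    apply Summable.of_nonneg_of_le (fun i => sq_nonneg _)
      (f := fun i => D ^ 2 * ⟪y, w i⟫ ^ 2)
    · intro i
      rw [mul_pow]
      apply mul_le_mul_of_nonneg_right _ (sq_nonneg _)
      have h1 := hD i
      nlinarith [abs_nonneg (μ i), sq_abs (μ i)]
    · exact (aux_sq_summable w y).mul_left _
  -- Part 2 : gradient
  have part2 : ∀ x : H, HasGradientAt f (∑' i, (μ i * ⟪x, w i⟫) • w i) x := by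
    intro x
    have hSg : HasSum (fun i => (μ i * ⟪x, w i⟫) • w i)
        (∑' i, (μ i * ⟪x, w i⟫) • w i) := (gradSummable x).hasSum
    rw [hasGradientAt_iff_isLittleO_nhds_zero]
    -- summability facts
    have Sxx : Summable fun i => μ i * ⟪x, w i⟫ ^ 2 := by
      apply Summable.of_abs
      apply Summable.of_nonneg_of_le (fun i => abs_nonneg _)
        (f := fun i => D * ⟪x, w i⟫ ^ 2)
      · intro i
        rw [abs_mul, abs_of_nonneg (sq_nonneg ⟪x, w i⟫)]
        exact mul_le_mul_of_nonneg_right (hD i) (sq_nonneg _)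
      · exact (aux_sq_summable w x).mul_left _
    have Shh : ∀ h : H, Summable fun i => μ i * ⟪h, w i⟫ ^ 2 := by
      intro h
      apply Summable.of_abs
      apply Summable.of_nonneg_of_le (fun i => abs_nonneg _)
        (f := fun i => D * ⟪h, w i⟫ ^ 2)
      · intro i
        rw [abs_mul, abs_of_nonneg (sq_nonneg ⟪h, w i⟫)]
        exact mul_le_mul_of_nonneg_right (hD i) (sq_nonneg _)
      · exact (aux_sq_summable w h).mul_left _
    have Sxh : ∀ h : H, Summable fun i => μ i * (⟪x, w i⟫ * ⟪h, w i⟫) := by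
      intro h
      apply Summable.of_abs
      apply Summable.of_nonneg_of_le (fun i => abs_nonneg _)
        (f := fun i => D / 2 * (⟪x, w i⟫ ^ 2 + ⟪h, w i⟫ ^ 2))
      · intro i
        rw [abs_mul, abs_mul]
        have h1 := hD i
        have h2 : |⟪x, w i⟫| * |⟪h, w i⟫| ≤ (⟪x, w i⟫ ^ 2 + ⟪h, w i⟫ ^ 2) / 2 := by
          nlinarith [sq_nonneg (|⟪x, w i⟫| - |⟪h, w i⟫|), sq_abs ⟪x, w i⟫, sq_abs ⟪h, w i⟫]
        have h3 := abs_nonneg (μ i)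
        nlinarith [mul_nonneg (abs_nonneg ⟪x, w i⟫) (abs_nonneg ⟪h, w i⟫),
          sq_nonneg ⟪x, w i⟫, sq_nonneg ⟪h, w i⟫]
      · exact (((aux_sq_summable w x).add (aux_sq_summable w h)).mul_left _)
    -- key identity
    have key : ∀ h : H, f (x + h) - f x - ⟪∑' i, (μ i * ⟪x, w i⟫) • w i, h⟫ =
        1 / 2 * ∑' i, μ i * ⟪h, w i⟫ ^ 2 := by
      intro h
      have hip : ⟪∑' i, (μ i * ⟪x, w i⟫) • w i, h⟫ =
          ∑' i, μ i * (⟪x, w i⟫ * ⟪h, w i⟫) := by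
        have h1 : HasSum (fun i => ⟪h, (μ i * ⟪x, w i⟫) • w i⟫) ⟪h, ∑' i, (μ i * ⟪x, w i⟫) • w i⟫ :=
          hSg.mapL (innerSL ℝ h)
        have h2 : (fun i => ⟪h, (μ i * ⟪x, w i⟫) • w i⟫) =
            fun i => μ i * (⟪x, w i⟫ * ⟪h, w i⟫) := by
          funext i; rw [real_inner_smul_right, real_inner_comm]; ring
        rw [h2] at h1
        rw [real_inner_comm, h1.tsum_eq]
      rw [hf, hf, hip]
      have hsplit : (fun i => μ i * ⟪x + h, w i⟫ ^ 2) =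
          fun i => (μ i * ⟪x, w i⟫ ^ 2 + μ i * ⟪h, w i⟫ ^ 2) +
            2 * (μ i * (⟪x, w i⟫ * ⟪h, w i⟫)) := by
        funext i; rw [inner_add_left]; ring
      rw [hsplit, Summable.tsum_add (Sxx.add (Shh h)) (((Sxh h).mul_left 2)),
        Summable.tsum_add Sxx (Shh h), tsum_mul_left]
      ring
    -- bound
    have bound : ∀ h : H, |1 / 2 * ∑' i, μ i * ⟪h, w i⟫ ^ 2| ≤ D / 2 * ‖h‖ ^ 2 := by
      intro h
      have habs_eq : ∀ i, |μ i * ⟪h, w i⟫ ^ 2| = |μ i| * ⟪h, w i⟫ ^ 2 := by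
        intro i
        rw [abs_mul, abs_of_nonneg (sq_nonneg ⟪h, w i⟫)]
      have hSabs : Summable fun i => |μ i| * ⟪h, w i⟫ ^ 2 :=
        ((Shh h).abs).congr habs_eq
      have h1 : |∑' i, μ i * ⟪h, w i⟫ ^ 2| ≤ ∑' i, |μ i| * ⟪h, w i⟫ ^ 2 := by
        have hn : Summable fun i => ‖μ i * ⟪h, w i⟫ ^ 2‖ := by
          have := (Shh h).abs
          exact this.congr fun i => (Real.norm_eq_abs _).symm
        calc |∑' i, μ i * ⟪h, w i⟫ ^ 2| = ‖∑' i, μ i * ⟪h, w i⟫ ^ 2‖ :=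
              (Real.norm_eq_abs _).symm
          _ ≤ ∑' i, ‖μ i * ⟪h, w i⟫ ^ 2‖ := norm_tsum_le_tsum_norm hn
          _ = ∑' i, |μ i| * ⟪h, w i⟫ ^ 2 := by
              refine tsum_congr fun i => ?_
              rw [Real.norm_eq_abs, habs_eq i]
      have h2 : ∑' i, |μ i| * ⟪h, w i⟫ ^ 2 ≤ ∑' i, D * ⟪h, w i⟫ ^ 2 := by
        refine Summable.tsum_le_tsum (fun i => ?_) hSabs ((aux_sq_summable w h).mul_left _)
        exact mul_le_mul_of_nonneg_right (hD i) (sq_nonneg _)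
      have h3 : ∑' i, D * ⟪h, w i⟫ ^ 2 ≤ D * ‖h‖ ^ 2 := by
        rw [tsum_mul_left]
        exact mul_le_mul_of_nonneg_left (aux_tsum_sq_le w h) hD0.le
      rw [abs_mul]
      have h4 : |(1:ℝ)/2| = 1/2 := by norm_num
      rw [h4]
      calc 1 / 2 * |∑' i, μ i * ⟪h, w i⟫ ^ 2| ≤ 1 / 2 * (D * ‖h‖ ^ 2) := by
            have := (h1.trans h2).trans h3
            linarith
        _ = D / 2 * ‖h‖ ^ 2 := by ring
    rw [Asymptotics.isLittleO_iff]
    intro c hc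
    have hball : ∀ᶠ h : H in nhds 0, ‖h‖ < 2 * c / D := by
      have := Metric.ball_mem_nhds (0 : H) (show (0:ℝ) < 2 * c / D by positivity)
      filter_upwards [this] with h hh
      simpa [Metric.mem_ball, dist_zero_right] using hh
    filter_upwards [hball] with h hh
    rw [key h, Real.norm_eq_abs]
    calc |1 / 2 * ∑' i, μ i * ⟪h, w i⟫ ^ 2| ≤ D / 2 * ‖h‖ ^ 2 := bound h
      _ = D / 2 * ‖h‖ * ‖h‖ := by ring
      _ ≤ c * ‖h‖ := by
          have hn := norm_nonneg h
          have h5 : ‖h‖ * D < 2 * c := (lt_div_iff₀ hD0).1 hh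
          have h6 : D / 2 * ‖h‖ ≤ c := by linarith
          nlinarith
  refine ⟨part1, part2, ?_⟩
  intro x
  constructor
  · -- Ψ 0 x = x
    rw [hΨ]
    have h1 : (fun i => (Real.exp (-μ i * 0) * ⟪x, w i⟫) • w i) =
        fun i => w.repr x i • w i := by
      funext i
      rw [w.repr_apply_apply, real_inner_comm]
      simp
    rw [h1, (w.hasSum_repr x).tsum_eq]
  · -- derivative
    intro t
    set a : ι → ℝ := fun i => ⟪x, w i⟫ with ha
    have hS : ∀ s : ℝ, HasSum (fun i => (Real.exp (-μ i * s) * a i) • w i) (Ψ s x) := by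
      intro s
      rw [hΨ]
      exact (part1 s x).hasSum
    have hcoef : ∀ i, ⟪Ψ t x, w i⟫ = Real.exp (-μ i * t) * a i :=
      fun i => aux_inner_tsum w (hS t) i
    -- the target vector
    set V : H := ∑' i, (μ i * ⟪Ψ t x, w i⟫) • w i with hV
    have hdsum : Summable fun i => (μ i * ⟪Ψ t x, w i⟫) • w i := gradSummable (Ψ t x)
    have hSV : HasSum (fun i => (μ i * (Real.exp (-μ i * t) * a i)) • w i) V := by
      have := hdsum.hasSum
      rw [← hV] at this
      convert this using 2 with i
      rw [hcoef i]
    rw [hasDerivAt_iff_isLittleO]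
    have hE : ∀ s : ℝ, HasSum
        (fun i => ((Real.exp (-μ i * s) * a i - Real.exp (-μ i * t) * a i) +
          (s - t) * (μ i * (Real.exp (-μ i * t) * a i))) • w i)
        (Ψ s x - Ψ t x + (s - t) • V) := by
      intro s
      have h1 := ((hS s).sub (hS t)).add (hSV.const_smul (s - t))
      convert h1 using 2 with i
      rw [add_smul, sub_smul, smul_smul]
    -- pointwise coefficient bound for |s - t| small
    have coefBound : ∀ s : ℝ, |s - t| ≤ 1 / D →
        ∀ i, |(Real.exp (-μ i * s) * a i - Real.exp (-μ i * t) * a i) +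
          (s - t) * (μ i * (Real.exp (-μ i * t) * a i))| ≤
          (Real.exp (D * |t|) * D ^ 2 * (s - t) ^ 2) * |a i| := by
      intro s hs i
      set h : ℝ := s - t with hh
      have hexp : Real.exp (-μ i * s) = Real.exp (-μ i * t) * Real.exp (-μ i * h) := by
        rw [← Real.exp_add]; congr 1; ring
      have heq : (Real.exp (-μ i * s) * a i - Real.exp (-μ i * t) * a i) +
          h * (μ i * (Real.exp (-μ i * t) * a i)) =
          (Real.exp (-μ i * t) * a i) * (Real.exp (-μ i * h) - 1 - (-μ i * h)) := by
        rw [hexp]; ring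
      have he0 : (0:ℝ) < Real.exp (-μ i * t) := Real.exp_pos _
      rw [heq, abs_mul, abs_mul, abs_of_pos he0]
      have hz : |(-μ i * h)| ≤ 1 := by
        rw [abs_mul, abs_neg]
        calc |μ i| * |h| ≤ D * (1 / D) := by
              have := hD i; have := abs_nonneg (μ i); have := abs_nonneg h
              nlinarith
          _ = 1 := by field_simp
      have htaylor : |Real.exp (-μ i * h) - 1 - (-μ i * h)| ≤ (-μ i * h) ^ 2 :=
        Real.abs_exp_sub_one_sub_id_le hz
      have hμh : (-μ i * h) ^ 2 ≤ D ^ 2 * h ^ 2 := by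
        have hd := hD i
        have hμ2 : μ i ^ 2 ≤ D ^ 2 := by nlinarith [sq_abs (μ i), abs_nonneg (μ i)]
        calc (-μ i * h) ^ 2 = μ i ^ 2 * h ^ 2 := by ring
          _ ≤ D ^ 2 * h ^ 2 := mul_le_mul_of_nonneg_right hμ2 (sq_nonneg h)
      have hexpb : Real.exp (-μ i * t) ≤ Real.exp (D * |t|) := by
        apply Real.exp_le_exp.2
        calc -μ i * t ≤ |(-μ i) * t| := le_abs_self _
          _ = |μ i| * |t| := by rw [abs_mul, abs_neg]
          _ ≤ D * |t| := by have := hD i; have := abs_nonneg t; nlinarith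
      have hterm : |Real.exp (-μ i * h) - 1 - (-μ i * h)| ≤ D ^ 2 * h ^ 2 :=
        htaylor.trans hμh
      calc Real.exp (-μ i * t) * |a i| * |Real.exp (-μ i * h) - 1 - (-μ i * h)| ≤
            Real.exp (D * |t|) * |a i| * (D ^ 2 * h ^ 2) := by
            have h1 : Real.exp (-μ i * t) * |a i| ≤ Real.exp (D * |t|) * |a i| :=
              mul_le_mul_of_nonneg_right hexpb (abs_nonneg _)
            have h2 : (0:ℝ) ≤ Real.exp (-μ i * t) * |a i| :=
              mul_nonneg he0.le (abs_nonneg _)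
            have h3 : (0:ℝ) ≤ |Real.exp (-μ i * h) - 1 - (-μ i * h)| := abs_nonneg _
            nlinarith [mul_nonneg (mul_nonneg (Real.exp_pos (D * |t|)).le (abs_nonneg (a i)))
              (sq_nonneg (D * h))]
        _ = (Real.exp (D * |t|) * D ^ 2 * h ^ 2) * |a i| := by ring
    set K : ℝ := Real.exp (D * |t|) * D ^ 2 with hK_def
    have hK : (0:ℝ) < K := by positivity
    have normBound : ∀ s : ℝ, |s - t| ≤ 1 / D →
        ‖Ψ s x - Ψ t x + (s - t) • V‖ ≤ (K * (s - t) ^ 2) * ‖x‖ := by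
      intro s hs
      exact aux_norm_le w (hE s) (by positivity) (coefBound s hs)
    rw [Asymptotics.isLittleO_iff]
    intro c hc
    have hδ : (0:ℝ) < min (1 / D) (c / (K * (‖x‖ + 1))) := by positivity
    filter_upwards [Metric.ball_mem_nhds t hδ] with s hs
    rw [Metric.mem_ball, Real.dist_eq] at hs
    have hs1 : |s - t| ≤ 1 / D := (lt_min_iff.1 hs).1.le
    have hs2 : |s - t| ≤ c / (K * (‖x‖ + 1)) := (lt_min_iff.1 hs).2.le
    have hb := normBound s hs1
    rw [smul_neg, sub_neg_eq_add]
    rw [le_div_iff₀ (by positivity : (0:ℝ) < K * (‖x‖ + 1))] at hs2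
    have hxn : (0:ℝ) ≤ ‖x‖ := norm_nonneg x
    have habs : (0:ℝ) ≤ |s - t| := abs_nonneg _
    have hsq : (s - t) ^ 2 = |s - t| ^ 2 := (sq_abs _).symm
    rw [Real.norm_eq_abs]
    calc ‖Ψ s x - Ψ t x + (s - t) • V‖ ≤ (K * (s - t) ^ 2) * ‖x‖ := hb
      _ ≤ c * |s - t| := by rw [hsq]; nlinarith
end
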